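/- Let m and n be positive integers, let G′ be a finite abelian group, and let G = ℤ_{2m} × ℤ_{4n} × G′. Then G has no near-factorization (A, B) in which |A| ≡ 3 or 5 (mod 8), or |B| ≡ 3 or 5 (mod 8). -/

import Mathlib

open Finset
open scoped Pointwise

/-- A pair `(A, B)` of subsets of a finite additive group `G` is a near-factorization of `G`
if `|A| * |B| = |G| - 1` and `A + B = G \ {0}`. -/
def IsAddNearFactorization {G : Type*} [AddGroup G] [Fintype G] [DecidableEq G]
    (A B : Finset G) : Prop :=
  A.card * B.card = Fintype.card G - 1 ∧ A + B = Finset.univ \ {0}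


lemma sqsum_one (p q : ℤ) (h : p^2 + q^2 = 1) :
    (p = 0 ∧ (q = 1 ∨ q = -1)) ∨ (q = 0 ∧ (p = 1 ∨ p = -1)) := by
  have hp1 : -1 ≤ p ∧ p ≤ 1 := by constructor <;> nlinarith [sq_nonneg q, sq_nonneg (p-1), sq_nonneg (p+1)]
  have hq1 : -1 ≤ q ∧ q ≤ 1 := by constructor <;> nlinarith [sq_nonneg p, sq_nonneg (q-1), sq_nonneg (q+1)]
  obtain ⟨hp, hp'⟩ := hp1; obtain ⟨hq, hq'⟩ := hq1
  interval_cases p <;> interval_cases q <;> simp_all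

lemma unit_of_mul_neg_one (x y : ℤ) (h : x * y = -1) : x = 1 ∨ x = -1 := by
  have : IsUnit x := IsUnit.of_mul_eq_one (a := x) (-y) (by linarith [h])
  exact Int.isUnit_iff.mp this


lemma eq_one_of_nonneg_mul_eq_one (x y : ℤ) (hx : 0 ≤ x) (hxy : x * y = 1) : x = 1 := by
  rcases Int.isUnit_iff.mp (IsUnit.of_mul_eq_one (a := x) y hxy) with h | h <;> omega

lemma core' (a0 a1 a2 a3 a4 a5 a6 a7 b0 b1 b2 b3 b4 b5 b6 b7 h : ℤ)
    (E00 : a0*b0 + a1*b3 + a2*b2 + a3*b1 + a4*b4 + a5*b7 + a6*b6 + a7*b5 = h - 1)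
    (E01 : a0*b1 + a1*b0 + a2*b3 + a3*b2 + a4*b5 + a5*b4 + a6*b7 + a7*b6 = h)
    (E02 : a0*b2 + a1*b1 + a2*b0 + a3*b3 + a4*b6 + a5*b5 + a6*b4 + a7*b7 = h)
    (E03 : a0*b3 + a1*b2 + a2*b1 + a3*b0 + a4*b7 + a5*b6 + a6*b5 + a7*b4 = h)
    (E10 : a0*b4 + a1*b7 + a2*b6 + a3*b5 + a4*b0 + a5*b3 + a6*b2 + a7*b1 = h)
    (E11 : a0*b5 + a1*b4 + a2*b7 + a3*b6 + a4*b1 + a5*b0 + a6*b3 + a7*b2 = h)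
    (E12 : a0*b6 + a1*b5 + a2*b4 + a3*b7 + a4*b2 + a5*b1 + a6*b0 + a7*b3 = h)
    (E13 : a0*b7 + a1*b6 + a2*b5 + a3*b4 + a4*b3 + a5*b2 + a6*b1 + a7*b0 = h) :
    (a0+a1+a2+a3+a4+a5+a6+a7) % 8 = 1 ∨ (a0+a1+a2+a3+a4+a5+a6+a7) % 8 = 7 := by
  have hP : (a0+a1+a2+a3-a4-a5-a6-a7) * (b0+b1+b2+b3-b4-b5-b6-b7) = -1 := by
    linear_combination E00 + E01 + E02 + E03 - E10 - E11 - E12 - E13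
  have hD : (a0-a1+a2-a3+a4-a5+a6-a7) * (b0-b1+b2-b3+b4-b5+b6-b7) = -1 := by
    linear_combination E00 - E01 + E02 - E03 + E10 - E11 + E12 - E13
  have hQ : (a0-a1+a2-a3-a4+a5-a6+a7) * (b0-b1+b2-b3-b4+b5-b6+b7) = -1 := by
    linear_combination E00 - E01 + E02 - E03 - E10 + E11 - E12 + E13
  have hcr : (a0-a2+a4-a6) * (b0-b2+b4-b6) - (a1-a3+a5-a7) * (b1-b3+b5-b7) = -1 := by
    linear_combination E00 - E02 + E10 - E12
  have hci : (a0-a2+a4-a6) * (b1-b3+b5-b7) + (a1-a3+a5-a7) * (b0-b2+b4-b6) = 0 := by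
    linear_combination E01 - E03 + E11 - E13
  have hdr : (a0-a2-a4+a6) * (b0-b2-b4+b6) - (a1-a3-a5+a7) * (b1-b3-b5+b7) = -1 := by
    linear_combination E00 - E02 - E10 + E12
  have hdi : (a0-a2-a4+a6) * (b1-b3-b5+b7) + (a1-a3-a5+a7) * (b0-b2-b4+b6) = 0 := by
    linear_combination E01 - E03 - E11 + E13
  have hPu := unit_of_mul_neg_one _ _ hP
  have hDu := unit_of_mul_neg_one _ _ hD
  have hQu := unit_of_mul_neg_one _ _ hQ
  have hpq : (a0-a2+a4-a6)^2 + (a1-a3+a5-a7)^2 = 1 := by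
    have h1 : ((a0-a2+a4-a6)^2 + (a1-a3+a5-a7)^2) * ((b0-b2+b4-b6)^2 + (b1-b3+b5-b7)^2) = 1 := by
      linear_combination ((a0-a2+a4-a6) * (b0-b2+b4-b6) - (a1-a3+a5-a7) * (b1-b3+b5-b7) - 1) * hcr
        + ((a0-a2+a4-a6) * (b1-b3+b5-b7) + (a1-a3+a5-a7) * (b0-b2+b4-b6)) * hci
    exact eq_one_of_nonneg_mul_eq_one _ _ (by positivity) h1
  have hrs : (a0-a2-a4+a6)^2 + (a1-a3-a5+a7)^2 = 1 := by
    have h1 : ((a0-a2-a4+a6)^2 + (a1-a3-a5+a7)^2) * ((b0-b2-b4+b6)^2 + (b1-b3-b5+b7)^2) = 1 := by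
      linear_combination ((a0-a2-a4+a6) * (b0-b2-b4+b6) - (a1-a3-a5+a7) * (b1-b3-b5+b7) - 1) * hdr
        + ((a0-a2-a4+a6) * (b1-b3-b5+b7) + (a1-a3-a5+a7) * (b0-b2-b4+b6)) * hdi
    exact eq_one_of_nonneg_mul_eq_one _ _ (by positivity) h1
  have h1 := sqsum_one _ _ hpq
  have h2 := sqsum_one _ _ hrs
  omega

lemma key (u v : ZMod 2 × ZMod 4 → ℤ) (h : ℤ)
    (H : ∀ x : ZMod 2 × ZMod 4, ∑ y, u y * v (x - y) = h - if x = 0 then 1 else 0) :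
    (∑ y, u y) % 8 = 1 ∨ (∑ y, u y) % 8 = 7 := by
  have hsum : ∀ f : ZMod 2 × ZMod 4 → ℤ, ∑ y, f y =
      f (0,0) + f (0,1) + f (0,2) + f (0,3) + f (1,0) + f (1,1) + f (1,2) + f (1,3) := by
    intro f
    rw [Fintype.sum_prod_type]
    show ∑ x : Fin 2, ∑ y : Fin 4, f (x, y) = _
    rw [Fin.sum_univ_two, Fin.sum_univ_four, Fin.sum_univ_four]
    simp only [add_assoc]; rfl
  have E00 := H ((0:ZMod 2),(0:ZMod 4))
  rw [if_pos (by decide : (((0:ZMod 2),(0:ZMod 4)) : ZMod 2 × ZMod 4) = 0)] at E00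
  rw [hsum] at E00
  simp only [show (((0:ZMod 2),(0:ZMod 4)) : ZMod 2 × ZMod 4) - ((0:ZMod 2),(0:ZMod 4)) = ((0:ZMod 2),(0:ZMod 4)) from by decide, show (((0:ZMod 2),(0:ZMod 4)) : ZMod 2 × ZMod 4) - ((0:ZMod 2),(1:ZMod 4)) = ((0:ZMod 2),(3:ZMod 4)) from by decide, show (((0:ZMod 2),(0:ZMod 4)) : ZMod 2 × ZMod 4) - ((0:ZMod 2),(2:ZMod 4)) = ((0:ZMod 2),(2:ZMod 4)) from by decide, show (((0:ZMod 2),(0:ZMod 4)) : ZMod 2 × ZMod 4) - ((0:ZMod 2),(3:ZMod 4)) = ((0:ZMod 2),(1:ZMod 4)) from by decide, show (((0:ZMod 2),(0:ZMod 4)) : ZMod 2 × ZMod 4) - ((1:ZMod 2),(0:ZMod 4)) = ((1:ZMod 2),(0:ZMod 4)) from by decide, show (((0:ZMod 2),(0:ZMod 4)) : ZMod 2 × ZMod 4) - ((1:ZMod 2),(1:ZMod 4)) = ((1:ZMod 2),(3:ZMod 4)) from by decide, show (((0:ZMod 2),(0:ZMod 4)) : ZMod 2 × ZMod 4) - ((1:ZMod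 2),(2:ZMod 4)) = ((1:ZMod 2),(2:ZMod 4)) from by decide, show (((0:ZMod 2),(0:ZMod 4)) : ZMod 2 × ZMod 4) - ((1:ZMod 2),(3:ZMod 4)) = ((1:ZMod 2),(1:ZMod 4)) from by decide] at E00
  have E01 := H ((0:ZMod 2),(1:ZMod 4))
  rw [if_neg (by decide : ¬(((0:ZMod 2),(1:ZMod 4)) : ZMod 2 × ZMod 4) = 0), sub_zero] at E01
  rw [hsum] at E01
  simp only [show (((0:ZMod 2),(1:ZMod 4)) : ZMod 2 × ZMod 4) - ((0:ZMod 2),(0:ZMod 4)) = ((0:ZMod 2),(1:ZMod 4)) from by decide, show (((0:ZMod 2),(1:ZMod 4)) : ZMod 2 × ZMod 4) - ((0:ZMod 2),(1:ZMod 4)) = ((0:ZMod 2),(0:ZMod 4)) from by decide, show (((0:ZMod 2),(1:ZMod 4)) : ZMod 2 × ZMod 4) - ((0:ZMod 2),(2:ZMod 4)) = ((0:ZMod 2),(3:ZMod 4)) from by decide, show (((0:ZMod 2),(1:ZMod 4)) : ZMod 2 × ZMod 4) - ((0:ZMod 2),(3:ZMod 4)) = ((0:ZMod 2),(2:ZMod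 4)) from by decide, show (((0:ZMod 2),(1:ZMod 4)) : ZMod 2 × ZMod 4) - ((1:ZMod 2),(0:ZMod 4)) = ((1:ZMod 2),(1:ZMod 4)) from by decide, show (((0:ZMod 2),(1:ZMod 4)) : ZMod 2 × ZMod 4) - ((1:ZMod 2),(1:ZMod 4)) = ((1:ZMod 2),(0:ZMod 4)) from by decide, show (((0:ZMod 2),(1:ZMod 4)) : ZMod 2 × ZMod 4) - ((1:ZMod 2),(2:ZMod 4)) = ((1:ZMod 2),(3:ZMod 4)) from by decide, show (((0:ZMod 2),(1:ZMod 4)) : ZMod 2 × ZMod 4) - ((1:ZMod 2),(3:ZMod 4)) = ((1:ZMod 2),(2:ZMod 4)) from by decide] at E01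
  have E02 := H ((0:ZMod 2),(2:ZMod 4))
  rw [if_neg (by decide : ¬(((0:ZMod 2),(2:ZMod 4)) : ZMod 2 × ZMod 4) = 0), sub_zero] at E02
  rw [hsum] at E02
  simp only [show (((0:ZMod 2),(2:ZMod 4)) : ZMod 2 × ZMod 4) - ((0:ZMod 2),(0:ZMod 4)) = ((0:ZMod 2),(2:ZMod 4)) from by decide, show (((0:ZMod 2),(2:ZMod 4)) : ZMod 2 × ZMod 4) - ((0:ZMod 2),(1:ZMod 4)) = ((0:ZMod 2),(1:ZMod 4)) from by decide, show (((0:ZMod 2),(2:ZMod 4)) : ZMod 2 × ZMod 4) - ((0:ZMod 2),(2:ZMod 4)) = ((0:ZMod 2),(0:ZMod 4)) from by decide, show (((0:ZMod 2),(2:ZMod 4)) : ZMod 2 × ZMod 4) - ((0:ZMod 2),(3:ZMod 4)) = ((0:ZMod 2),(3:ZMod 4)) from by decide, show (((0:ZMod 2),(2:ZMod 4)) : ZMod 2 × ZMod 4) - ((1:ZMod 2),(0:ZMod 4)) = ((1:ZMod 2),(2:ZMod 4)) from by decide, show (((0:ZMod 2),(2:ZMod 4)) : ZMod 2 × ZMod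 4) - ((1:ZMod 2),(1:ZMod 4)) = ((1:ZMod 2),(1:ZMod 4)) from by decide, show (((0:ZMod 2),(2:ZMod 4)) : ZMod 2 × ZMod 4) - ((1:ZMod 2),(2:ZMod 4)) = ((1:ZMod 2),(0:ZMod 4)) from by decide, show (((0:ZMod 2),(2:ZMod 4)) : ZMod 2 × ZMod 4) - ((1:ZMod 2),(3:ZMod 4)) = ((1:ZMod 2),(3:ZMod 4)) from by decide] at E02
  have E03 := H ((0:ZMod 2),(3:ZMod 4))
  rw [if_neg (by decide : ¬(((0:ZMod 2),(3:ZMod 4)) : ZMod 2 × ZMod 4) = 0), sub_zero] at E03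
  rw [hsum] at E03
  simp only [show (((0:ZMod 2),(3:ZMod 4)) : ZMod 2 × ZMod 4) - ((0:ZMod 2),(0:ZMod 4)) = ((0:ZMod 2),(3:ZMod 4)) from by decide, show (((0:ZMod 2),(3:ZMod 4)) : ZMod 2 × ZMod 4) - ((0:ZMod 2),(1:ZMod 4)) = ((0:ZMod 2),(2:ZMod 4)) from by decide, show (((0:ZMod 2),(3:ZMod 4)) : ZMod 2 × ZMod 4) - ((0:ZMod 2),(2:ZMod 4)) = ((0:ZMod 2),(1:ZMod 4)) from by decide, show (((0:ZMod 2),(3:ZMod 4)) : ZMod 2 × ZMod 4) - ((0:ZMod 2),(3:ZMod 4)) = ((0:ZMod 2),(0:ZMod 4)) from by decide, show (((0:ZMod 2),(3:ZMod 4)) : ZMod 2 × ZMod 4) - ((1:ZMod 2),(0:ZMod 4)) = ((1:ZMod 2),(3:ZMod 4)) from by decide, show (((0:ZMod 2),(3:ZMod 4)) : ZMod 2 × ZMod 4) - ((1:ZMod 2),(1:ZMod 4)) = ((1:ZMod 2),(2:ZMod 4)) from by decide, show (((0:ZMod 2),(3:ZMod 4)) : ZMod 2 × ZMod 4) - ((1:ZMod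 2),(2:ZMod 4)) = ((1:ZMod 2),(1:ZMod 4)) from by decide, show (((0:ZMod 2),(3:ZMod 4)) : ZMod 2 × ZMod 4) - ((1:ZMod 2),(3:ZMod 4)) = ((1:ZMod 2),(0:ZMod 4)) from by decide] at E03
  have E10 := H ((1:ZMod 2),(0:ZMod 4))
  rw [if_neg (by decide : ¬(((1:ZMod 2),(0:ZMod 4)) : ZMod 2 × ZMod 4) = 0), sub_zero] at E10
  rw [hsum] at E10
  simp only [show (((1:ZMod 2),(0:ZMod 4)) : ZMod 2 × ZMod 4) - ((0:ZMod 2),(0:ZMod 4)) = ((1:ZMod 2),(0:ZMod 4)) from by decide, show (((1:ZMod 2),(0:ZMod 4)) : ZMod 2 × ZMod 4) - ((0:ZMod 2),(1:ZMod 4)) = ((1:ZMod 2),(3:ZMod 4)) from by decide, show (((1:ZMod 2),(0:ZMod 4)) : ZMod 2 × ZMod 4) - ((0:ZMod 2),(2:ZMod 4)) = ((1:ZMod 2),(2:ZMod 4)) from by decide, show (((1:ZMod 2),(0:ZMod 4)) : ZMod 2 × ZMod 4) - ((0:ZMod 2),(3:ZMod 4)) = ((1:ZMod 2),(1:ZMod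 4)) from by decide, show (((1:ZMod 2),(0:ZMod 4)) : ZMod 2 × ZMod 4) - ((1:ZMod 2),(0:ZMod 4)) = ((0:ZMod 2),(0:ZMod 4)) from by decide, show (((1:ZMod 2),(0:ZMod 4)) : ZMod 2 × ZMod 4) - ((1:ZMod 2),(1:ZMod 4)) = ((0:ZMod 2),(3:ZMod 4)) from by decide, show (((1:ZMod 2),(0:ZMod 4)) : ZMod 2 × ZMod 4) - ((1:ZMod 2),(2:ZMod 4)) = ((0:ZMod 2),(2:ZMod 4)) from by decide, show (((1:ZMod 2),(0:ZMod 4)) : ZMod 2 × ZMod 4) - ((1:ZMod 2),(3:ZMod 4)) = ((0:ZMod 2),(1:ZMod 4)) from by decide] at E10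
  have E11 := H ((1:ZMod 2),(1:ZMod 4))
  rw [if_neg (by decide : ¬(((1:ZMod 2),(1:ZMod 4)) : ZMod 2 × ZMod 4) = 0), sub_zero] at E11
  rw [hsum] at E11
  simp only [show (((1:ZMod 2),(1:ZMod 4)) : ZMod 2 × ZMod 4) - ((0:ZMod 2),(0:ZMod 4)) = ((1:ZMod 2),(1:ZMod 4)) from by decide, show (((1:ZMod 2),(1:ZMod 4)) : ZMod 2 × ZMod 4) - ((0:ZMod 2),(1:ZMod 4)) = ((1:ZMod 2),(0:ZMod 4)) from by decide, show (((1:ZMod 2),(1:ZMod 4)) : ZMod 2 × ZMod 4) - ((0:ZMod 2),(2:ZMod 4)) = ((1:ZMod 2),(3:ZMod 4)) from by decide, show (((1:ZMod 2),(1:ZMod 4)) : ZMod 2 × ZMod 4) - ((0:ZMod 2),(3:ZMod 4)) = ((1:ZMod 2),(2:ZMod 4)) from by decide, show (((1:ZMod 2),(1:ZMod 4)) : ZMod 2 × ZMod 4) - ((1:ZMod 2),(0:ZMod 4)) = ((0:ZMod 2),(1:ZMod 4)) from by decide, show (((1:ZMod 2),(1:ZMod 4)) : ZMod 2 × ZMod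 4) - ((1:ZMod 2),(1:ZMod 4)) = ((0:ZMod 2),(0:ZMod 4)) from by decide, show (((1:ZMod 2),(1:ZMod 4)) : ZMod 2 × ZMod 4) - ((1:ZMod 2),(2:ZMod 4)) = ((0:ZMod 2),(3:ZMod 4)) from by decide, show (((1:ZMod 2),(1:ZMod 4)) : ZMod 2 × ZMod 4) - ((1:ZMod 2),(3:ZMod 4)) = ((0:ZMod 2),(2:ZMod 4)) from by decide] at E11
  have E12 := H ((1:ZMod 2),(2:ZMod 4))
  rw [if_neg (by decide : ¬(((1:ZMod 2),(2:ZMod 4)) : ZMod 2 × ZMod 4) = 0), sub_zero] at E12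
  rw [hsum] at E12
  simp only [show (((1:ZMod 2),(2:ZMod 4)) : ZMod 2 × ZMod 4) - ((0:ZMod 2),(0:ZMod 4)) = ((1:ZMod 2),(2:ZMod 4)) from by decide, show (((1:ZMod 2),(2:ZMod 4)) : ZMod 2 × ZMod 4) - ((0:ZMod 2),(1:ZMod 4)) = ((1:ZMod 2),(1:ZMod 4)) from by decide, show (((1:ZMod 2),(2:ZMod 4)) : ZMod 2 × ZMod 4) - ((0:ZMod 2),(2:ZMod 4)) = ((1:ZMod 2),(0:ZMod 4)) from by decide, show (((1:ZMod 2),(2:ZMod 4)) : ZMod 2 × ZMod 4) - ((0:ZMod 2),(3:ZMod 4)) = ((1:ZMod 2),(3:ZMod 4)) from by decide, show (((1:ZMod 2),(2:ZMod 4)) : ZMod 2 × ZMod 4) - ((1:ZMod 2),(0:ZMod 4)) = ((0:ZMod 2),(2:ZMod 4)) from by decide, show (((1:ZMod 2),(2:ZMod 4)) : ZMod 2 × ZMod 4) - ((1:ZMod 2),(1:ZMod 4)) = ((0:ZMod 2),(1:ZMod 4)) from by decide, show (((1:ZMod 2),(2:ZMod 4)) : ZMod 2 × ZMod 4) - ((1:ZMod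 2),(2:ZMod 4)) = ((0:ZMod 2),(0:ZMod 4)) from by decide, show (((1:ZMod 2),(2:ZMod 4)) : ZMod 2 × ZMod 4) - ((1:ZMod 2),(3:ZMod 4)) = ((0:ZMod 2),(3:ZMod 4)) from by decide] at E12
  have E13 := H ((1:ZMod 2),(3:ZMod 4))
  rw [if_neg (by decide : ¬(((1:ZMod 2),(3:ZMod 4)) : ZMod 2 × ZMod 4) = 0), sub_zero] at E13
  rw [hsum] at E13
  simp only [show (((1:ZMod 2),(3:ZMod 4)) : ZMod 2 × ZMod 4) - ((0:ZMod 2),(0:ZMod 4)) = ((1:ZMod 2),(3:ZMod 4)) from by decide, show (((1:ZMod 2),(3:ZMod 4)) : ZMod 2 × ZMod 4) - ((0:ZMod 2),(1:ZMod 4)) = ((1:ZMod 2),(2:ZMod 4)) from by decide, show (((1:ZMod 2),(3:ZMod 4)) : ZMod 2 × ZMod 4) - ((0:ZMod 2),(2:ZMod 4)) = ((1:ZMod 2),(1:ZMod 4)) from by decide, show (((1:ZMod 2),(3:ZMod 4)) : ZMod 2 × ZMod 4) - ((0:ZMod 2),(3:ZMod 4)) = ((1:ZMod 2),(0:ZMod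 4)) from by decide, show (((1:ZMod 2),(3:ZMod 4)) : ZMod 2 × ZMod 4) - ((1:ZMod 2),(0:ZMod 4)) = ((0:ZMod 2),(3:ZMod 4)) from by decide, show (((1:ZMod 2),(3:ZMod 4)) : ZMod 2 × ZMod 4) - ((1:ZMod 2),(1:ZMod 4)) = ((0:ZMod 2),(2:ZMod 4)) from by decide, show (((1:ZMod 2),(3:ZMod 4)) : ZMod 2 × ZMod 4) - ((1:ZMod 2),(2:ZMod 4)) = ((0:ZMod 2),(1:ZMod 4)) from by decide, show (((1:ZMod 2),(3:ZMod 4)) : ZMod 2 × ZMod 4) - ((1:ZMod 2),(3:ZMod 4)) = ((0:ZMod 2),(0:ZMod 4)) from by decide] at E13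
  rw [hsum]
  exact core' _ _ _ _ _ _ _ _ _ _ _ _ _ _ _ _ _ E00 E01 E02 E03 E10 E11 E12 E13

theorem no_near_factorization_Z2m_Z4n (m n : ℕ) [NeZero m] [NeZero n]
    {G' : Type*} [AddCommGroup G'] [Fintype G'] [DecidableEq G']
    (A B : Finset (ZMod (2 * m) × ZMod (4 * n) × G'))
    (h : IsAddNearFactorization A B) :
    ¬ (A.card % 8 = 3 ∨ A.card % 8 = 5 ∨ B.card % 8 = 3 ∨ B.card % 8 = 5) := by
  intro hmod
  obtain ⟨hcard, hAB⟩ := h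
  haveI : NeZero (2 * m) := ⟨by have := NeZero.ne m; omega⟩
  haveI : NeZero (4 * n) := ⟨by have := NeZero.ne n; omega⟩
  classical
  set π₁ : ZMod (2 * m) →+ ZMod 2 := (ZMod.castHom ⟨m, rfl⟩ (ZMod 2)).toAddMonoidHom with hπ₁
  set π₂ : ZMod (4 * n) →+ ZMod 4 := (ZMod.castHom ⟨n, rfl⟩ (ZMod 4)).toAddMonoidHom with hπ₂
  set πh : (ZMod (2 * m) × ZMod (4 * n) × G') →+ ZMod 2 × ZMod 4 :=
    (π₁.comp (AddMonoidHom.fst _ _)).prod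
      (π₂.comp ((AddMonoidHom.fst _ _).comp (AddMonoidHom.snd _ _))) with hπh
  set π : (ZMod (2 * m) × ZMod (4 * n) × G') → ZMod 2 × ZMod 4 := fun g => πh g with hπ
  have πadd : ∀ g₁ g₂, π (g₁ + g₂) = π g₁ + π g₂ := fun g₁ g₂ => map_add πh g₁ g₂
  have π0 : π 0 = 0 := map_zero πh
  have πsub : ∀ g₁ g₂, π (g₁ - g₂) = π g₁ - π g₂ := fun g₁ g₂ => map_sub πh g₁ g₂
  have πsurj : ∀ x : ZMod 2 × ZMod 4, ∃ g, π g = x := by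
    rintro ⟨x1, x2⟩
    refine ⟨((x1.val : ZMod (2 * m)), (x2.val : ZMod (4 * n)), 0), ?_⟩
    show (π₁ (x1.val : ZMod (2 * m)), π₂ (x2.val : ZMod (4 * n))) = (x1, x2)
    rw [hπ₁, hπ₂]
    simp only [RingHom.toAddMonoidHom_eq_coe, AddMonoidHom.coe_coe, map_natCast]
    exact Prod.ext (ZMod.natCast_rightInverse x1) (ZMod.natCast_rightInverse x2)
  set F : ZMod 2 × ZMod 4 → ℕ := fun x => (univ.filter fun g => π g = x).card with hF
  set nA : ZMod 2 × ZMod 4 → ℕ := fun y => (A.filter fun a => π a = y).card with hnA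
  set nB : ZMod 2 × ZMod 4 → ℕ := fun y => (B.filter fun b => π b = y).card with hnB
  have hFconst : ∀ x, F x = F 0 := by
    intro x
    obtain ⟨g₀, hg₀⟩ := πsurj x
    refine Finset.card_nbij' (fun g => g - g₀) (fun g => g + g₀) ?_ ?_ ?_ ?_
    · intro g hg
      simp only [mem_coe, mem_filter, mem_univ, true_and] at hg ⊢
      rw [πsub, hg, hg₀, sub_self]
    · intro g hg
      simp only [mem_coe, mem_filter, mem_univ, true_and] at hg ⊢
      rw [πadd, hg, hg₀, zero_add]
    · intro g _; simp
    · intro g _; simp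
  have hDcard : (univ \ {0} : Finset (ZMod (2 * m) × ZMod (4 * n) × G')).card
      = Fintype.card (ZMod (2 * m) × ZMod (4 * n) × G') - 1 := by
    rw [Finset.card_sdiff_of_subset (by simp)]
    simp
  have hABcard : (A ×ˢ B).card = (univ \ {0} : Finset (ZMod (2 * m) × ZMod (4 * n) × G')).card := by
    rw [Finset.card_product, hcard, hDcard]
  have himg : (A ×ˢ B).image (fun p => p.1 + p.2) = univ \ {0} := by
    rw [Finset.image_add_product, hAB]
  have hinj : Set.InjOn (fun p : (ZMod (2 * m) × ZMod (4 * n) × G') × (ZMod (2 * m) × ZMod (4 * n) × G') => p.1 + p.2) ↑(A ×ˢ B) :=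
    Finset.card_image_iff.mp (by rw [himg, hABcard])
  have hcount : ∀ x : ZMod 2 × ZMod 4,
      (∑ y : ZMod 2 × ZMod 4, nA y * nB (x - y)) + (if x = 0 then 1 else 0) = F x := by
    intro x
    have step1 : ((A ×ˢ B).filter fun p => π (p.1 + p.2) = x).card
        = ∑ y : ZMod 2 × ZMod 4, nA y * nB (x - y) := by
      rw [Finset.card_eq_sum_card_fiberwise
        (f := fun p : _ × _ => π p.1) (t := univ) (fun p _ => mem_univ _)]
      refine Finset.sum_congr rfl ?_
      intro y _
      have heq : ((A ×ˢ B).filter fun p => π (p.1 + p.2) = x).filter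
          (fun p => π p.1 = y)
          = (A.filter fun a => π a = y) ×ˢ (B.filter fun b => π b = x - y) := by
        ext p
        simp only [Finset.mem_filter, Finset.mem_product]
        constructor
        · rintro ⟨⟨⟨ha, hb⟩, hx⟩, hy⟩
          refine ⟨⟨ha, hy⟩, hb, ?_⟩
          rw [← hx, πadd, hy]
          abel
        · rintro ⟨⟨ha, hy⟩, hb, hb'⟩
          refine ⟨⟨⟨ha, hb⟩, ?_⟩, hy⟩
          rw [πadd, hy, hb']
          abel
      rw [heq, Finset.card_product]
    have step2 : ((A ×ˢ B).filter fun p => π (p.1 + p.2) = x).card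
        = ((univ \ {0} : Finset (ZMod (2 * m) × ZMod (4 * n) × G')).filter
            fun g => π g = x).card := by
      have himg2 : (((A ×ˢ B).filter fun p => π (p.1 + p.2) = x).image (fun p => p.1 + p.2))
          = (univ \ {0} : Finset (ZMod (2 * m) × ZMod (4 * n) × G')).filter
              fun g => π g = x := by
        rw [← himg, Finset.filter_image]
      rw [← himg2]
      exact (Finset.card_image_of_injOn
        (hinj.mono (by exact_mod_cast Finset.filter_subset _ _))).symm
    have hdisj : Disjoint
        ((univ \ {0} : Finset (ZMod (2 * m) × ZMod (4 * n) × G')).filter fun g => π g = x)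
        (({0} : Finset (ZMod (2 * m) × ZMod (4 * n) × G')).filter fun g => π g = x) :=
      Finset.disjoint_filter_filter Finset.sdiff_disjoint
    have step3 : F x
        = ((univ \ {0} : Finset (ZMod (2 * m) × ZMod (4 * n) × G')).filter
            fun g => π g = x).card
          + (({0} : Finset (ZMod (2 * m) × ZMod (4 * n) × G')).filter fun g => π g = x).card := by
      rw [hF]
      simp only
      conv_lhs => rw [show (univ : Finset (ZMod (2 * m) × ZMod (4 * n) × G'))
        = (univ \ {0}) ∪ {0} from (Finset.sdiff_union_of_subset (by simp)).symm]
      rw [Finset.filter_union, Finset.card_union_of_disjoint hdisj]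
    have step4 : (({0} : Finset (ZMod (2 * m) × ZMod (4 * n) × G')).filter
        fun g => π g = x).card = if x = 0 then 1 else 0 := by
      rw [Finset.filter_singleton, π0]
      split_ifs with h1 h2 h2
      · simp
      · exact absurd h1.symm h2
      · exact absurd h2.symm h1
      · simp
    rw [step3, step4, ← step2, step1]
  have H : ∀ x : ZMod 2 × ZMod 4,
      ∑ y, (nA y : ℤ) * (nB (x - y) : ℤ) = (F 0 : ℤ) - if x = 0 then 1 else 0 := by
    intro x
    have h1 := hcount x
    have h2 := hFconst x
    have hc : ((∑ y : ZMod 2 × ZMod 4, nA y * nB (x - y) : ℕ) : ℤ)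
        = ∑ y, (nA y : ℤ) * (nB (x - y) : ℤ) := by push_cast; rfl
    rw [← hc]
    split_ifs at h1 ⊢ <;> omega
  have H' : ∀ x : ZMod 2 × ZMod 4,
      ∑ y, (nB y : ℤ) * (nA (x - y) : ℤ) = (F 0 : ℤ) - if x = 0 then 1 else 0 := by
    intro x
    rw [← H x]
    refine Fintype.sum_equiv (Equiv.subLeft x) _ _ ?_
    intro y
    simp only [Equiv.subLeft_apply, sub_sub_cancel]
    ring
  have kA := key (fun y => (nA y : ℤ)) (fun y => (nB y : ℤ)) (F 0) H
  have kB := key (fun y => (nB y : ℤ)) (fun y => (nA y : ℤ)) (F 0) H'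
  have hAcard : A.card = ∑ y : ZMod 2 × ZMod 4, nA y :=
    Finset.card_eq_sum_card_fiberwise (fun a _ => mem_univ (π a))
  have hBcard : B.card = ∑ y : ZMod 2 × ZMod 4, nB y :=
    Finset.card_eq_sum_card_fiberwise (fun b _ => mem_univ (π b))
  have cA : ((A.card : ℤ)) = ∑ y, (nA y : ℤ) := by rw [hAcard]; push_cast; rfl
  have cB : ((B.card : ℤ)) = ∑ y, (nB y : ℤ) := by rw [hBcard]; push_cast; rfl
  rw [← cA] at kA
  rw [← cB] at kB
  omega
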